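/- For all positive integers m and n, the set B = {(i,j) ∈ V(HD(m,n)) : i + j = m − 1} ∪ {(i,j) ∈ V(HD(m,n)) : j = i + m} is a 1-leaky forcing set of the Hopi rectangle graph HD(m,n); consequently the 1-leaky forcing number of HD(m,n) is at most m + n, i.e., Z_{(1)}(HD(m,n)) ≤ m + n. -/

import Mathlib

/-- One round of the zero forcing color change rule, where vertices in the
leak set `L` are not permitted to force. A blue vertex `u ∉ L` with exactly one
non-blue neighbor `v` turns `v` blue. -/
def zfStep {V : Type*} (G : SimpleGraph V) (L : Set V) (B : Set V) : Set V :=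
  B ∪ {v | ∃ u ∈ B, u ∉ L ∧ G.Adj u v ∧ ∀ w, G.Adj u w → w ∉ B → w = v}

/-- The set of vertices eventually colored blue starting from `B`, with leaks `L`. -/
def zfClosure {V : Type*} (G : SimpleGraph V) (L : Set V) (B : Set V) : Set V :=
  ⋃ k, (zfStep G L)^[k] B

/-- `B` is an `ℓ`-leaky forcing set: for every leak set of size at most `ℓ`,
starting with exactly `B` blue, eventually every vertex becomes blue. -/
def IsLeakyForcingSet {V : Type*} (G : SimpleGraph V) (ℓ : ℕ) (B : Set V) : Prop :=
  ∀ L : Set V, L.ncard ≤ ℓ → zfClosure G L B = Set.univ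

/-- `B` is a zero forcing set (no leaks). -/
def IsZeroForcingSet {V : Type*} (G : SimpleGraph V) (B : Set V) : Prop :=
  zfClosure G (∅ : Set V) B = Set.univ

/-- The zero forcing number `Z(G)`: minimum cardinality of a zero forcing set. -/
noncomputable def zfNumber {V : Type*} (G : SimpleGraph V) : ℕ :=
  sInf (Set.ncard '' {B : Set V | IsZeroForcingSet G B})

/-- The `ℓ`-leaky forcing number `Z_(ℓ)(G)`: minimum cardinality of an
`ℓ`-leaky forcing set. -/
noncomputable def leakyNumber {V : Type*} (G : SimpleGraph V) (ℓ : ℕ) : ℕ :=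
  sInf (Set.ncard '' {B : Set V | IsLeakyForcingSet G ℓ B})

/-- The vertex set of the Hopi rectangle graph of order `(m,n)`: the set of
integer lattice points `(i,j)` with `m-1 ≤ i+j ≤ 2n+m-1` and `|i-j| ≤ m`
(realized as a `Finset` by filtering a sufficiently large box). -/
noncomputable def HDverts (m n : ℕ) : Finset (ℤ × ℤ) :=
  (Finset.Icc (-2 : ℤ) (2*n + 2*m) ×ˢ Finset.Icc (-2 : ℤ) (2*n + 2*m)).filter
    (fun p => (m : ℤ) - 1 ≤ p.1 + p.2 ∧ p.1 + p.2 ≤ 2*n + m - 1 ∧ |p.1 - p.2| ≤ m)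

/-- The Hopi rectangle graph `HD(m,n)`: vertices are the points of `HDverts m n`,
and `(i,j)` is adjacent to `(i',j')` iff `|i - i'| + |j - j'| = 1`. -/
def HD (m n : ℕ) : SimpleGraph {p : ℤ × ℤ // p ∈ HDverts m n} where
  Adj u v := |u.val.1 - v.val.1| + |u.val.2 - v.val.2| = 1
  symm := by
    constructor
    intro u v h
    rw [abs_sub_comm v.val.1 u.val.1, abs_sub_comm v.val.2 u.val.2]
    exact h
  loopless := by constructor; intro u h; simp at h

/-- The set `B = {(i,j) : i + j = m - 1} ∪ {(i,j) : j = i + m}` of vertices of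
`HD(m,n)`. -/
def HDB (m n : ℕ) : Set {p : ℤ × ℤ // p ∈ HDverts m n} :=
  {v | v.val.1 + v.val.2 = (m : ℤ) - 1} ∪ {v | v.val.2 = v.val.1 + (m : ℤ)}

/- ============ Auxiliary lemmas ============ -/

section GeneralZF

variable {V : Type*} (G : SimpleGraph V) (L B : Set V)

lemma subset_zfStep : B ⊆ zfStep G L B := Set.subset_union_left

lemma subset_zfStep_iterate (k : ℕ) : B ⊆ (zfStep G L)^[k] B := by
  induction k with
  | zero => simp
  | succ k ih =>
    rw [Function.iterate_succ_apply']
    exact ih.trans (subset_zfStep G L _)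

lemma zf_iterate_mono {k l : ℕ} (h : k ≤ l) :
    (zfStep G L)^[k] B ⊆ (zfStep G L)^[l] B := by
  obtain ⟨d, rfl⟩ := Nat.exists_eq_add_of_le h
  rw [Nat.add_comm, Function.iterate_add_apply]
  exact subset_zfStep_iterate G L _ d

lemma mem_zfClosure_iff {x : V} :
    x ∈ zfClosure G L B ↔ ∃ k, x ∈ (zfStep G L)^[k] B := Set.mem_iUnion

lemma subset_zfClosure : B ⊆ zfClosure G L B :=
  fun x hx => (mem_zfClosure_iff G L B).2 ⟨0, hx⟩

lemma force_mem [Fintype V] {u v : V} (hu : u ∈ zfClosure G L B) (huL : u ∉ L)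
    (hadj : G.Adj u v) (hw : ∀ w, G.Adj u w → w ≠ v → w ∈ zfClosure G L B) :
    v ∈ zfClosure G L B := by
  classical
  obtain ⟨ku, hku⟩ := (mem_zfClosure_iff G L B).1 hu
  have hex : ∀ w : V, ∃ k, G.Adj u w → w ≠ v → w ∈ (zfStep G L)^[k] B := by
    intro w
    by_cases h : G.Adj u w ∧ w ≠ v
    · obtain ⟨k, hk⟩ := (mem_zfClosure_iff G L B).1 (hw w h.1 h.2)
      exact ⟨k, fun _ _ => hk⟩
    · exact ⟨0, fun h1 h2 => absurd ⟨h1, h2⟩ h⟩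
  choose f hf using hex
  set K := max ku (Finset.univ.sup f) with hK
  refine (mem_zfClosure_iff G L B).2 ⟨K + 1, ?_⟩
  rw [Function.iterate_succ_apply']
  refine Set.mem_union_right _ ⟨u, ?_, huL, hadj, ?_⟩
  · exact zf_iterate_mono G L B (le_max_left _ _) hku
  · intro w hadj' hwB
    by_contra hne
    exact hwB (zf_iterate_mono G L B
      (le_trans (Finset.le_sup (Finset.mem_univ w)) (le_max_right _ _)) (hf w hadj' hne))

end GeneralZF

/- ============ HD specific helpers ============ -/

abbrev Vx (m n : ℕ) := {p : ℤ × ℤ // p ∈ HDverts m n}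

lemma mem_HDverts {m n : ℕ} {p : ℤ × ℤ} :
    p ∈ HDverts m n ↔ ((m : ℤ) - 1 ≤ p.1 + p.2 ∧ p.1 + p.2 ≤ 2*n + m - 1 ∧
      -(m : ℤ) ≤ p.1 - p.2 ∧ p.1 - p.2 ≤ m) := by
  simp only [HDverts, Finset.mem_filter, Finset.mem_product, Finset.mem_Icc, abs_le]
  constructor
  · rintro ⟨-, h1, h2, h3, h4⟩; exact ⟨h1, h2, h3, h4⟩
  · rintro ⟨h1, h2, h3, h4⟩
    refine ⟨⟨⟨?_, ?_⟩, ?_, ?_⟩, h1, h2, h3, h4⟩ <;> omega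

lemma mem_HDverts' {m n : ℕ} {i j : ℤ} :
    (i, j) ∈ HDverts m n ↔ ((m : ℤ) - 1 ≤ i + j ∧ i + j ≤ 2*n + m - 1 ∧
      -(m : ℤ) ≤ i - j ∧ i - j ≤ m) := mem_HDverts

lemma abs_one_iff (x y : ℤ) : |x| + |y| = 1 ↔
    (x = 1 ∧ y = 0) ∨ (x = -1 ∧ y = 0) ∨ (x = 0 ∧ y = 1) ∨ (x = 0 ∧ y = -1) := by
  rcases abs_cases x with ⟨hx, _⟩ | ⟨hx, _⟩ <;> rcases abs_cases y with ⟨hy, _⟩ | ⟨hy, _⟩ <;> omega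

lemma HD_adj_iff {m n : ℕ} {u v : Vx m n} :
    (HD m n).Adj u v ↔ |u.val.1 - v.val.1| + |u.val.2 - v.val.2| = 1 := Iff.rfl

lemma mem_HDB {m n : ℕ} {v : Vx m n} :
    v ∈ HDB m n ↔ v.val.1 + v.val.2 = (m : ℤ) - 1 ∨ v.val.2 = v.val.1 + m := Iff.rfl

lemma prod_eq {x y : ℤ} {p : ℤ × ℤ} (h1 : p.1 = x) (h2 : p.2 = y) : p = (x, y) := by
  cases p; simp_all

/-- The "shadow" of a leak at `(a,b)`: the triangle to the right. -/
def InShadow (a b i j : ℤ) : Prop :=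
  a + 1 ≤ i ∧ b - (i - a - 1) ≤ j ∧ j ≤ b + (i - a - 1)

lemma base_mem {m n : ℕ} (v : Vx m n) (h0 : v.val.1 ≤ 0) : v ∈ HDB m n := by
  have hv := mem_HDverts.1 v.2
  rw [mem_HDB]
  omega

/-- Column sweep: every vertex outside the shadow of the (unique possible) leak
is eventually blue. -/
lemma claimA {m n : ℕ} (L : Set (Vx m n)) (a b : ℤ)
    (hL : ∀ x ∈ L, (x : Vx m n).val = (a, b)) :
    ∀ N : ℕ, ∀ v : Vx m n, v.val.1.toNat ≤ N → ¬ InShadow a b v.val.1 v.val.2 →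
      v ∈ zfClosure (HD m n) L (HDB m n) := by
  intro N
  induction N with
  | zero =>
    intro v hN _
    exact subset_zfClosure _ _ _ (base_mem v (by omega))
  | succ N ih =>
    intro v hN hsh
    by_cases hB : v ∈ HDB m n
    · exact subset_zfClosure _ _ _ hB
    have hv := mem_HDverts.1 v.2
    rw [mem_HDB] at hB
    push_neg at hB
    obtain ⟨hB1, hB2⟩ := hB
    have hi1 : 1 ≤ v.val.1 := by omega
    have huu : ((v.val.1 - 1 : ℤ), v.val.2) ∈ HDverts m n := by
      rw [mem_HDverts']; omega
    refine force_mem (HD m n) L (HDB m n) (u := ⟨(v.val.1 - 1, v.val.2), huu⟩)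
      ?_ ?_ ?_ ?_
    · refine ih _ (by simp; omega) ?_
      simp only [InShadow] at hsh ⊢
      omega
    · intro hmem
      have h := hL _ hmem
      simp only [Prod.mk.injEq] at h
      simp only [InShadow] at hsh
      omega
    · rw [HD_adj_iff]
      simp only [abs_one_iff]
      omega
    · intro w hadjw hwv
      rw [HD_adj_iff] at hadjw
      simp only [abs_one_iff] at hadjw
      have hwvval : w.val ≠ v.val := fun h => hwv (Subtype.ext h)
      have hne : ¬ (w.val.1 = v.val.1 ∧ w.val.2 = v.val.2) := by
        intro ⟨h1, h2⟩
        exact hwvval ((prod_eq h1 h2).trans (prod_eq rfl rfl).symm)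
      refine ih w (by simp; omega) ?_
      simp only [InShadow] at hsh ⊢
      omega

/-- Downward diagonal chain: recovers the vertex `(a+1, b)` to the right of the
leak `(a,b)` when `m - (a - b)` is even. -/
lemma chain_low {m n : ℕ} (L : Set (Vx m n)) (a b : ℤ) (hab : (a, b) ∈ HDverts m n)
    (hL : ∀ x ∈ L, (x : Vx m n).val = (a, b)) (hpar : ((m : ℤ) - a + b) % 2 = 0) :
    ∀ r : ℕ, ∀ t : ℤ, 0 ≤ t → ∀ v : Vx m n, v.val = (a + 1 + t, b - t) →
      ((m : ℤ) - (a - b + 2*t)).toNat ≤ r → v ∈ zfClosure (HD m n) L (HDB m n) := by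
  have habv := mem_HDverts'.1 hab
  intro r
  induction r with
  | zero =>
    intro t ht v hveq hmeas
    have hv := mem_HDverts.1 v.2
    rw [hveq] at hv
    simp only at hv
    omega
  | succ r ih =>
    intro t ht v hveq hmeas
    have hv := mem_HDverts.1 v.2
    rw [hveq] at hv
    simp only at hv
    have huu : ((a + 1 + t : ℤ), b - t - 1) ∈ HDverts m n := by
      rw [mem_HDverts']; omega
    refine force_mem (HD m n) L (HDB m n) (u := ⟨(a + 1 + t, b - t - 1), huu⟩)
      ?_ ?_ ?_ ?_
    · refine claimA L a b hL _ ⟨(a + 1 + t, b - t - 1), huu⟩ (le_refl _) ?_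
      simp only [InShadow]
      omega
    · intro hmem
      have h := hL _ hmem
      simp only [Prod.mk.injEq] at h
      omega
    · rw [HD_adj_iff, hveq]
      simp only [abs_one_iff]
      omega
    · intro w hadjw hwv
      rw [HD_adj_iff] at hadjw
      simp only [abs_one_iff] at hadjw
      have hwvval : w.val ≠ v.val := fun h => hwv (Subtype.ext h)
      rw [hveq] at hwvval
      have hne : ¬ (w.val.1 = a + 1 + t ∧ w.val.2 = b - t) := by
        intro ⟨h1, h2⟩
        exact hwvval (prod_eq h1 h2)
      have hwmem := mem_HDverts.1 w.2
      rcases hadjw with ⟨h1, h2⟩ | ⟨h1, h2⟩ | ⟨h1, h2⟩ | ⟨h1, h2⟩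
      · -- w = (a + t, b - t - 1)
        refine claimA L a b hL _ w (le_refl _) ?_
        simp only [InShadow]; omega
      · -- w = (a + 2 + t, b - t - 1) : next chain element
        refine ih (t + 1) (by omega) w (prod_eq (by omega) (by omega)) (by omega)
      · -- w = (a + 1 + t, b - t - 2)
        refine claimA L a b hL _ w (le_refl _) ?_
        simp only [InShadow]; omega
      · -- w = (a + 1 + t, b - t) = v
        exact absurd ⟨by omega, by omega⟩ hne

/-- Upward diagonal chain: recovers the vertex `(a+1, b)` to the right of the
leak `(a,b)` when `2n + m - 1 - (a + b)` is even. -/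
lemma chain_up {m n : ℕ} (L : Set (Vx m n)) (a b : ℤ) (hab : (a, b) ∈ HDverts m n)
    (hL : ∀ x ∈ L, (x : Vx m n).val = (a, b))
    (hpar : (2*(n : ℤ) + m - 1 - a - b) % 2 = 0) :
    ∀ r : ℕ, ∀ t : ℤ, 0 ≤ t → ∀ v : Vx m n, v.val = (a + 1 + t, b + t) →
      (2*(n : ℤ) + m - 1 - (a + b + 2*t)).toNat ≤ r →
      v ∈ zfClosure (HD m n) L (HDB m n) := by
  have habv := mem_HDverts'.1 hab
  intro r
  induction r with
  | zero =>
    intro t ht v hveq hmeas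
    have hv := mem_HDverts.1 v.2
    rw [hveq] at hv
    simp only at hv
    omega
  | succ r ih =>
    intro t ht v hveq hmeas
    have hv := mem_HDverts.1 v.2
    rw [hveq] at hv
    simp only at hv
    have huu : ((a + 1 + t : ℤ), b + t + 1) ∈ HDverts m n := by
      rw [mem_HDverts']; omega
    refine force_mem (HD m n) L (HDB m n) (u := ⟨(a + 1 + t, b + t + 1), huu⟩)
      ?_ ?_ ?_ ?_
    · refine claimA L a b hL _ ⟨(a + 1 + t, b + t + 1), huu⟩ (le_refl _) ?_
      simp only [InShadow]
      omega
    · intro hmem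
      have h := hL _ hmem
      simp only [Prod.mk.injEq] at h
      omega
    · rw [HD_adj_iff, hveq]
      simp only [abs_one_iff]
      omega
    · intro w hadjw hwv
      rw [HD_adj_iff] at hadjw
      simp only [abs_one_iff] at hadjw
      have hwvval : w.val ≠ v.val := fun h => hwv (Subtype.ext h)
      rw [hveq] at hwvval
      have hne : ¬ (w.val.1 = a + 1 + t ∧ w.val.2 = b + t) := by
        intro ⟨h1, h2⟩
        exact hwvval (prod_eq h1 h2)
      have hwmem := mem_HDverts.1 w.2
      rcases hadjw with ⟨h1, h2⟩ | ⟨h1, h2⟩ | ⟨h1, h2⟩ | ⟨h1, h2⟩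
      · -- w = (a + t, b + t + 1)
        refine claimA L a b hL _ w (le_refl _) ?_
        simp only [InShadow]; omega
      · -- w = (a + 2 + t, b + t + 1) : next chain element
        refine ih (t + 1) (by omega) w (prod_eq (by omega) (by omega)) (by omega)
      · -- w = (a + 1 + t, b + t) = v
        exact absurd ⟨by omega, by omega⟩ hne
      · -- w = (a + 1 + t, b + t + 2)
        refine claimA L a b hL _ w (le_refl _) ?_
        simp only [InShadow]; omega

/-- Resumed column sweep: once the vertex right of the leak is blue, everything
gets blue. -/
lemma claimB {m n : ℕ} (L : Set (Vx m n)) (a b : ℤ)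
    (hL : ∀ x ∈ L, (x : Vx m n).val = (a, b))
    (hab : ∀ v : Vx m n, v.val = (a + 1, b) → v ∈ zfClosure (HD m n) L (HDB m n)) :
    ∀ N : ℕ, ∀ v : Vx m n, v.val.1.toNat ≤ N →
      v ∈ zfClosure (HD m n) L (HDB m n) := by
  intro N
  induction N with
  | zero =>
    intro v hN
    exact subset_zfClosure _ _ _ (base_mem v (by omega))
  | succ N ih =>
    intro v hN
    by_cases hB : v ∈ HDB m n
    · exact subset_zfClosure _ _ _ hB
    by_cases hstep : v.val = (a + 1, b)
    · exact hab v hstep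
    have hv := mem_HDverts.1 v.2
    rw [mem_HDB] at hB
    push_neg at hB
    obtain ⟨hB1, hB2⟩ := hB
    have hi1 : 1 ≤ v.val.1 := by omega
    have huu : ((v.val.1 - 1 : ℤ), v.val.2) ∈ HDverts m n := by
      rw [mem_HDverts']; omega
    refine force_mem (HD m n) L (HDB m n) (u := ⟨(v.val.1 - 1, v.val.2), huu⟩)
      ?_ ?_ ?_ ?_
    · exact ih _ (by simp; omega)
    · intro hmem
      have h := hL _ hmem
      simp only [Prod.mk.injEq] at h
      exact hstep (prod_eq (by omega) (by omega))
    · rw [HD_adj_iff]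
      simp only [abs_one_iff]
      omega
    · intro w hadjw hwv
      rw [HD_adj_iff] at hadjw
      simp only [abs_one_iff] at hadjw
      have hwvval : w.val ≠ v.val := fun h => hwv (Subtype.ext h)
      have hne : ¬ (w.val.1 = v.val.1 ∧ w.val.2 = v.val.2) := by
        intro ⟨h1, h2⟩
        exact hwvval ((prod_eq h1 h2).trans (prod_eq rfl rfl).symm)
      exact ih w (by simp; omega)

lemma HDB_leaky {m n : ℕ} : IsLeakyForcingSet (HD m n) 1 (HDB m n) := by
  intro L hL1
  rw [Set.eq_univ_iff_forall]
  intro v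
  rcases Set.eq_empty_or_nonempty L with rfl | ⟨l, hl⟩
  · -- no leak : plain column sweep with a fictitious far-away leak
    refine claimA (m := m) (n := n) ∅ (2*n + 2*m + 2) 0 (by simp) _ v (le_refl _) ?_
    have hv := mem_HDverts.1 v.2
    simp only [InShadow]
    omega
  · have hsub : ∀ x ∈ L, ∀ y ∈ L, x = y := (Set.ncard_le_one (Set.toFinite L)).1 hL1
    obtain ⟨⟨a, b⟩, habmem⟩ := l
    have hL : ∀ x ∈ L, (x : Vx m n).val = (a, b) := by
      intro x hx
      have := hsub x hx _ hl
      rw [this]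
    have hstep : ∀ w : Vx m n, w.val = (a + 1, b) →
        w ∈ zfClosure (HD m n) L (HDB m n) := by
      intro w hw
      rcases Int.emod_two_eq_zero_or_one ((m : ℤ) - a + b) with hp | hp
      · exact chain_low L a b habmem hL hp ((m : ℤ) - (a - b)).toNat 0 (le_refl 0) w
          (by rw [hw]; norm_num)
          (by omega)
      · have hp2 : (2*(n : ℤ) + m - 1 - a - b) % 2 = 0 := by omega
        exact chain_up L a b habmem hL hp2 (2*(n : ℤ) + m - 1 - (a + b)).toNat 0
          (le_refl 0) w
          (by rw [hw]; norm_num)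
          (by omega)
    exact claimB L a b hL hstep _ v (le_refl _)

noncomputable def HDphi (m n : ℕ) (v : Vx m n) : ℕ :=
  if v.val.1 + v.val.2 = (m : ℤ) - 1 then v.val.1.toNat else m + v.val.1.toNat

lemma HDB_card {m n : ℕ} (hm : 0 < m) (hn : 0 < n) : (HDB m n).ncard ≤ m + n := by
  classical
  have hinj : Set.InjOn (HDphi m n) (HDB m n) := by
    intro v hv w hw heq
    have hvm := mem_HDverts.1 v.2
    have hwm := mem_HDverts.1 w.2
    rw [mem_HDB] at hv hw
    unfold HDphi at heq
    refine Subtype.ext ((prod_eq rfl rfl).trans ((prod_eq ?_ ?_).symm)) <;>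
      · split_ifs at heq <;> omega
  have himg : HDphi m n '' HDB m n ⊆ ↑(Finset.range (m + n)) := by
    rintro x ⟨v, hv, rfl⟩
    have hvm := mem_HDverts.1 v.2
    rw [mem_HDB] at hv
    simp only [Finset.coe_range, Set.mem_Iio]
    unfold HDphi
    split_ifs <;> omega
  calc (HDB m n).ncard = (HDphi m n '' HDB m n).ncard :=
        (Set.ncard_image_of_injOn hinj).symm
    _ ≤ (↑(Finset.range (m + n)) : Set ℕ).ncard :=
        Set.ncard_le_ncard himg (Finset.finite_toSet _)
    _ = m + n := by rw [Set.ncard_coe_finset, Finset.card_range]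

/-- The set `B = {(i,j) : i + j = m - 1} ∪ {(i,j) : j = i + m}` is a `1`-leaky
forcing set of `HD(m,n)`; consequently `Z_(1)(HD(m,n)) ≤ m + n`. -/
theorem HDB_is_one_leaky_forcing (m n : ℕ) (hm : 0 < m) (hn : 0 < n) :
    IsLeakyForcingSet (HD m n) 1 (HDB m n) ∧ leakyNumber (HD m n) 1 ≤ m + n := by
  refine ⟨HDB_leaky, ?_⟩
  refine le_trans (Nat.sInf_le ⟨HDB m n, HDB_leaky, rfl⟩) ?_
  exact HDB_card hm hn
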